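/- arXiv:2502.08565 — 2 statements merged into one kernel-verified Lean document; each statement's English description precedes it below -/
import Mathlib

section
/- In a single round-robin group of 4 teams with the 3-1-0 point system, any team finishing with at least 7 points is guaranteed to be ranked in the top two positions by points, i.e., at most one other team can have a strictly higher point total. -/
def ValidScore (score : Fin 4 → Fin 4 → ℕ) : Prop :=
  ∀ i j, i ≠ j → (score i j, score j i) ∈ ({(3, 0), (0, 3), (1, 1)} : Set (ℕ × ℕ))

def points (score : Fin 4 → Fin 4 → ℕ) (i : Fin 4) : ℕ :=
  ∑ j ∈ Finset.univ.erase i, score i j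

/-- Any team with at least 7 points finishes in the top two: at most one other
team has strictly more points. -/
theorem seven_points_top_two (score : Fin 4 → Fin 4 → ℕ)
    (hvalid : ValidScore score) (i : Fin 4) (h : 7 ≤ points score i) :
    (Finset.univ.filter (fun j => points score i < points score j)).card ≤ 1 := by
  have H : ∀ a b : Fin 4, a ≠ b → (score a b = 3 ∧ score b a = 0) ∨
      (score a b = 0 ∧ score b a = 3) ∨ (score a b = 1 ∧ score b a = 1) := by
    intro a b hab
    have := hvalid a b hab
    simpa [Prod.ext_iff] using this
  -- points of b are at most score b a + 6 for any a ≠ b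
  have bound : ∀ a b : Fin 4, b ≠ a → points score b ≤ score b a + 6 := by
    intro a b hba
    have hmem : a ∈ Finset.univ.erase b := by
      simp [Finset.mem_erase, Ne.symm hba]
    rw [points, ← Finset.add_sum_erase _ _ hmem]
    have hsum : ∑ j ∈ (Finset.univ.erase b).erase a, score b j ≤
        ((Finset.univ.erase b).erase a).card * 3 := by
      apply Finset.sum_le_card_nsmul
      intro x hx
      have hxb : x ≠ b := by
        have := Finset.mem_erase.mp (Finset.mem_erase.mp hx).2
        exact this.1
      have := H b x (Ne.symm hxb)
      omega
    have hcard : ((Finset.univ.erase b).erase a).card = 2 := by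
      rw [Finset.card_erase_of_mem hmem, Finset.card_erase_of_mem (Finset.mem_univ b)]
      simp
    omega
  -- team i scored at least 1 in every match
  have key : ∀ k : Fin 4, k ≠ i → 1 ≤ score i k := by
    intro k hk
    have := bound k i (Ne.symm hk)
    omega
  have hle : ∀ j : Fin 4, points score j ≤ points score i := by
    intro j
    by_cases hj : j = i
    · subst hj; exact le_refl _
    · have h1 := bound i j hj
      have h2 := H i j (Ne.symm hj)
      have h3 := key j hj
      omega
  have hempty : (Finset.univ.filter (fun j => points score i < points score j)) = ∅ := by
    rw [Finset.filter_eq_empty_iff]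
    intro j _
    exact not_lt.mpr (hle j)
  simp [hempty]
end

section
/- In a single round-robin group of 4 teams with the 3-1-0 point system, after each team has played exactly one match, no team can be guaranteed a top-two finish nor guaranteed to finish outside the top two: for any first-round results, every team still has some completion of the remaining matches placing it in the top two by points, and some completion placing it outside the top two. -/
/-- Team `i` finishes in the top two by points: at most one other team has
strictly more points. -/
def TopTwo (score : Fin 4 → Fin 4 → ℕ) (i : Fin 4) : Prop :=
  (Finset.univ.filter (fun j => points score i < points score j)).card ≤ 1

/-- Completion where `t` wins both remaining matches and `p t` loses both. -/
def sc1 (p : Fin 4 → Fin 4) (r1 : Fin 4 → Fin 4 → ℕ) (t : Fin 4) (i j : Fin 4) : ℕ :=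
  if j = p i then r1 i j else if i = t then 3 else if j = t then 0
  else if i = p t then 0 else 3

/-- Completion where `t` loses both remaining matches and `p t` loses both. -/
def sc2 (p : Fin 4 → Fin 4) (r1 : Fin 4 → Fin 4 → ℕ) (t : Fin 4) (i j : Fin 4) : ℕ :=
  if j = p i then r1 i j else if i = t then 0 else if j = t then 3
  else if i = p t then 0 else 3

lemma fin4_cover : ∀ t q a b j : Fin 4, q ≠ t → a ≠ t → a ≠ q → b ≠ t → b ≠ q → a ≠ b →
    j = t ∨ j = q ∨ j = a ∨ j = b := by decide

lemma fin4_forced : ∀ t q a b x : Fin 4, q ≠ t ∧ a ≠ t ∧ a ≠ q ∧ b ≠ t ∧ b ≠ q ∧ a ≠ b ∧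
    x ≠ t ∧ x ≠ q ∧ x ≠ a → x = b := by decide

lemma exists_ab : ∀ t q : Fin 4, q ≠ t →
    ∃ a b : Fin 4, a ≠ t ∧ a ≠ q ∧ b ≠ t ∧ b ≠ q ∧ a ≠ b := by decide

lemma erase_eq4 : ∀ i j k l : Fin 4, j ≠ i → k ≠ i → l ≠ i → j ≠ k → j ≠ l → k ≠ l →
    Finset.univ.erase i = {j, k, l} := by decide

lemma points_eq (s : Fin 4 → Fin 4 → ℕ) (i j k l : Fin 4) (h1 : j ≠ i) (h2 : k ≠ i)
    (h3 : l ≠ i) (h4 : j ≠ k) (h5 : j ≠ l) (h6 : k ≠ l) :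
    points s i = s i j + s i k + s i l := by
  rw [points, erase_eq4 i j k l h1 h2 h3 h4 h5 h6]
  rw [Finset.sum_insert (by simp [h4, h5]), Finset.sum_insert (by simp [h6]),
    Finset.sum_singleton]
  omega

lemma valid_sc1 (p : Fin 4 → Fin 4) (hinv : Function.Involutive p) (hnf : ∀ i, p i ≠ i)
    (r1 : Fin 4 → Fin 4 → ℕ)
    (hr1 : ∀ i, (r1 i (p i), r1 (p i) i) ∈ ({(3, 0), (0, 3), (1, 1)} : Set (ℕ × ℕ)))
    (t : Fin 4) : ValidScore (sc1 p r1 t) := by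
  intro i j hij
  by_cases hji : j = p i
  · subst hji
    have e1 : sc1 p r1 t i (p i) = r1 i (p i) := by unfold sc1; rw [if_pos rfl]
    have e2 : sc1 p r1 t (p i) i = r1 (p i) i := by unfold sc1; rw [if_pos (hinv i).symm]
    rw [e1, e2]; exact hr1 i
  · have hij' : ¬ i = p j := fun h => hji (by rw [h, hinv])
    rcases eq_or_ne i t with heq | hit
    · have hjt : j ≠ t := fun h => hij (heq.trans h.symm)
      have e1 : sc1 p r1 t i j = 3 := by unfold sc1; rw [if_neg hji, if_pos heq]
      have e2 : sc1 p r1 t j i = 0 := by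
        unfold sc1; rw [if_neg hij', if_neg hjt, if_pos heq]
      rw [e1, e2]; simp
    rcases eq_or_ne j t with heq | hjt
    · have e1 : sc1 p r1 t i j = 0 := by unfold sc1; rw [if_neg hji, if_neg hit, if_pos heq]
      have hipt : ¬ i = p t := fun h => hji (by rw [h, hinv]; exact heq)
      have e2 : sc1 p r1 t j i = 3 := by
        unfold sc1; rw [if_neg hij', if_pos heq]
      rw [e1, e2]; simp
    rcases eq_or_ne i (p t) with rfl | hipt
    · have e1 : sc1 p r1 t (p t) j = 0 := by
        unfold sc1; rw [if_neg hji, if_neg (hnf t), if_neg hjt, if_pos rfl]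
      have h1 : ¬ p t = p j := fun h => hjt (hinv.injective h).symm
      have e2 : sc1 p r1 t j (p t) = 3 := by
        unfold sc1; rw [if_neg h1, if_neg hjt, if_neg (hnf t), if_neg hij.symm]
      rw [e1, e2]; simp
    rcases eq_or_ne j (p t) with rfl | hjpt
    · have h1 : ¬ p t = p i := fun h => hit (hinv.injective h).symm
      have e1 : sc1 p r1 t i (p t) = 3 := by
        unfold sc1; rw [if_neg h1, if_neg hit, if_neg (hnf t), if_neg hipt]
      have e2 : sc1 p r1 t (p t) i = 0 := by
        unfold sc1; rw [if_neg hij', if_neg (hnf t), if_neg hit, if_pos rfl]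
      rw [e1, e2]; simp
    · exfalso
      have hx1 : p i ≠ t := fun h => hipt (by rw [← h, hinv])
      have hx2 : p i ≠ p t := fun h => hit (hinv.injective h)
      have := fin4_forced t (p t) i j (p i)
        ⟨hnf t, hit, hipt, hjt, hjpt, hij, hx1, hx2, hnf i⟩
      exact hji this.symm

lemma valid_sc2 (p : Fin 4 → Fin 4) (hinv : Function.Involutive p) (hnf : ∀ i, p i ≠ i)
    (r1 : Fin 4 → Fin 4 → ℕ)
    (hr1 : ∀ i, (r1 i (p i), r1 (p i) i) ∈ ({(3, 0), (0, 3), (1, 1)} : Set (ℕ × ℕ)))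
    (t : Fin 4) : ValidScore (sc2 p r1 t) := by
  intro i j hij
  by_cases hji : j = p i
  · subst hji
    have e1 : sc2 p r1 t i (p i) = r1 i (p i) := by unfold sc2; rw [if_pos rfl]
    have e2 : sc2 p r1 t (p i) i = r1 (p i) i := by unfold sc2; rw [if_pos (hinv i).symm]
    rw [e1, e2]; exact hr1 i
  · have hij' : ¬ i = p j := fun h => hji (by rw [h, hinv])
    rcases eq_or_ne i t with heq | hit
    · have hjt : j ≠ t := fun h => hij (heq.trans h.symm)
      have e1 : sc2 p r1 t i j = 0 := by unfold sc2; rw [if_neg hji, if_pos heq]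
      have e2 : sc2 p r1 t j i = 3 := by
        unfold sc2; rw [if_neg hij', if_neg hjt, if_pos heq]
      rw [e1, e2]; simp
    rcases eq_or_ne j t with heq | hjt
    · have e1 : sc2 p r1 t i j = 3 := by unfold sc2; rw [if_neg hji, if_neg hit, if_pos heq]
      have hipt : ¬ i = p t := fun h => hji (by rw [h, hinv]; exact heq)
      have e2 : sc2 p r1 t j i = 0 := by
        unfold sc2; rw [if_neg hij', if_pos heq]
      rw [e1, e2]; simp
    rcases eq_or_ne i (p t) with rfl | hipt
    · have e1 : sc2 p r1 t (p t) j = 0 := by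
        unfold sc2; rw [if_neg hji, if_neg (hnf t), if_neg hjt, if_pos rfl]
      have h1 : ¬ p t = p j := fun h => hjt (hinv.injective h).symm
      have e2 : sc2 p r1 t j (p t) = 3 := by
        unfold sc2; rw [if_neg h1, if_neg hjt, if_neg (hnf t), if_neg hij.symm]
      rw [e1, e2]; simp
    rcases eq_or_ne j (p t) with rfl | hjpt
    · have h1 : ¬ p t = p i := fun h => hit (hinv.injective h).symm
      have e1 : sc2 p r1 t i (p t) = 3 := by
        unfold sc2; rw [if_neg h1, if_neg hit, if_neg (hnf t), if_neg hipt]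
      have e2 : sc2 p r1 t (p t) i = 0 := by
        unfold sc2; rw [if_neg hij', if_neg (hnf t), if_neg hit, if_pos rfl]
      rw [e1, e2]; simp
    · exfalso
      have hx1 : p i ≠ t := fun h => hipt (by rw [← h, hinv])
      have hx2 : p i ≠ p t := fun h => hit (hinv.injective h)
      have := fin4_forced t (p t) i j (p i)
        ⟨hnf t, hit, hipt, hjt, hjpt, hij, hx1, hx2, hnf i⟩
      exact hji this.symm

/-- After the first round (given by a fixed-point-free involutive pairing `p`
and any valid first-round results `r1`), no team is guaranteed a top-two finish
nor guaranteed to finish outside the top two: every team admits a valid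
completion of the tournament placing it in the top two, and another valid
completion placing it outside the top two. -/
theorem first_round_decides_nothing (p : Fin 4 → Fin 4)
    (hinv : Function.Involutive p) (hnf : ∀ i, p i ≠ i)
    (r1 : Fin 4 → Fin 4 → ℕ)
    (hr1 : ∀ i, (r1 i (p i), r1 (p i) i) ∈ ({(3, 0), (0, 3), (1, 1)} : Set (ℕ × ℕ)))
    (t : Fin 4) :
    (∃ score : Fin 4 → Fin 4 → ℕ, ValidScore score ∧
      (∀ i, score i (p i) = r1 i (p i)) ∧ TopTwo score t) ∧
    (∃ score : Fin 4 → Fin 4 → ℕ, ValidScore score ∧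
      (∀ i, score i (p i) = r1 i (p i)) ∧ ¬TopTwo score t) := by
  obtain ⟨a, b, hat, haq, hbt, hbq, hab⟩ := exists_ab t (p t) (hnf t)
  have hpa : p a = b := by
    exact fin4_forced t (p t) a b (p a) ⟨hnf t, hat, haq, hbt, hbq, hab,
      fun h => haq (by rw [← h, hinv]), fun h => hat (hinv.injective h), hnf a⟩
  have hpb : p b = a := by rw [← hpa, hinv]
  -- bounds on first round results
  have hb1 : r1 t (p t) ≤ 3 ∧ r1 (p t) t ≤ 3 := by
    have := hr1 t
    simp only [Set.mem_insert_iff, Set.mem_singleton_iff, Prod.mk.injEq] at this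
    omega
  have hb2 : r1 a b ≤ 3 ∧ r1 b a ≤ 3 := by
    have := hr1 a
    rw [hpa] at this
    simp only [Set.mem_insert_iff, Set.mem_singleton_iff, Prod.mk.injEq] at this
    omega
  constructor
  · refine ⟨sc1 p r1 t, valid_sc1 p hinv hnf r1 hr1 t,
      fun i => by unfold sc1; rw [if_pos rfl], ?_⟩
    -- compute points
    have hpt : points (sc1 p r1 t) t = r1 t (p t) + 3 + 3 := by
      rw [points_eq _ t (p t) a b (hnf t) hat hbt haq.symm hbq.symm hab]
      have e1 : sc1 p r1 t t (p t) = r1 t (p t) := by unfold sc1; rw [if_pos rfl]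
      have e2 : sc1 p r1 t t a = 3 := by unfold sc1; rw [if_neg haq, if_pos rfl]
      have e3 : sc1 p r1 t t b = 3 := by unfold sc1; rw [if_neg hbq, if_pos rfl]
      rw [e1, e2, e3]
    have hpq : points (sc1 p r1 t) (p t) = r1 (p t) t := by
      rw [points_eq _ (p t) t a b (hnf t).symm haq hbq hat.symm hbt.symm hab]
      have e1 : sc1 p r1 t (p t) t = r1 (p t) t := by unfold sc1; rw [if_pos (hinv t).symm]
      have e2 : sc1 p r1 t (p t) a = 0 := by
        rw [sc1, if_neg (by rw [hinv t]; exact hat), if_neg (hnf t), if_neg hat, if_pos rfl]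
      have e3 : sc1 p r1 t (p t) b = 0 := by
        rw [sc1, if_neg (by rw [hinv t]; exact hbt), if_neg (hnf t), if_neg hbt, if_pos rfl]
      rw [e1, e2, e3]; omega
    have hpta : points (sc1 p r1 t) a = 3 + r1 a b := by
      rw [points_eq _ a t (p t) b hat.symm haq.symm hab.symm (hnf t).symm hbt.symm hbq.symm]
      have e1 : sc1 p r1 t a t = 0 := by
        rw [sc1, if_neg (by rw [hpa]; exact hbt.symm), if_neg hat, if_pos rfl]
      have e2 : sc1 p r1 t a (p t) = 3 := by
        rw [sc1, if_neg (by rw [hpa]; exact hbq.symm), if_neg hat, if_neg (hnf t),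
          if_neg haq]
      have e3 : sc1 p r1 t a b = r1 a b := by rw [sc1, if_pos hpa.symm]
      rw [e1, e2, e3]
    have hptb : points (sc1 p r1 t) b = 3 + r1 b a := by
      rw [points_eq _ b t (p t) a hbt.symm hbq.symm hab (hnf t).symm hat.symm haq.symm]
      have e1 : sc1 p r1 t b t = 0 := by
        rw [sc1, if_neg (by rw [hpb]; exact hat.symm), if_neg hbt, if_pos rfl]
      have e2 : sc1 p r1 t b (p t) = 3 := by
        rw [sc1, if_neg (by rw [hpb]; exact haq.symm), if_neg hbt, if_neg (hnf t),
          if_neg hbq]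
      have e3 : sc1 p r1 t b a = r1 b a := by rw [sc1, if_pos hpb.symm]
      rw [e1, e2, e3]
    unfold TopTwo
    have : (Finset.univ.filter
        (fun j => points (sc1 p r1 t) t < points (sc1 p r1 t) j)) = ∅ := by
      rw [Finset.filter_eq_empty_iff]
      intro j _
      simp only [not_lt]
      rcases fin4_cover t (p t) a b j (hnf t) hat haq hbt hbq hab with rfl | rfl | rfl | rfl
      · omega
      · rw [hpq, hpt]; omega
      · rw [hpta, hpt]; omega
      · rw [hptb, hpt]; omega
    rw [this]
    simp
  · refine ⟨sc2 p r1 t, valid_sc2 p hinv hnf r1 hr1 t,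
      fun i => by unfold sc2; rw [if_pos rfl], ?_⟩
    have hpt : points (sc2 p r1 t) t = r1 t (p t) := by
      rw [points_eq _ t (p t) a b (hnf t) hat hbt haq.symm hbq.symm hab]
      have e1 : sc2 p r1 t t (p t) = r1 t (p t) := by unfold sc2; rw [if_pos rfl]
      have e2 : sc2 p r1 t t a = 0 := by unfold sc2; rw [if_neg haq, if_pos rfl]
      have e3 : sc2 p r1 t t b = 0 := by unfold sc2; rw [if_neg hbq, if_pos rfl]
      rw [e1, e2, e3]; omega
    have hpta : points (sc2 p r1 t) a = 3 + 3 + r1 a b := by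
      rw [points_eq _ a t (p t) b hat.symm haq.symm hab.symm (hnf t).symm hbt.symm hbq.symm]
      have e1 : sc2 p r1 t a t = 3 := by
        rw [sc2, if_neg (by rw [hpa]; exact hbt.symm), if_neg hat, if_pos rfl]
      have e2 : sc2 p r1 t a (p t) = 3 := by
        rw [sc2, if_neg (by rw [hpa]; exact hbq.symm), if_neg hat, if_neg (hnf t),
          if_neg haq]
      have e3 : sc2 p r1 t a b = r1 a b := by rw [sc2, if_pos hpa.symm]
      rw [e1, e2, e3]
    have hptb : points (sc2 p r1 t) b = 3 + 3 + r1 b a := by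
      rw [points_eq _ b t (p t) a hbt.symm hbq.symm hab (hnf t).symm hat.symm haq.symm]
      have e1 : sc2 p r1 t b t = 3 := by
        rw [sc2, if_neg (by rw [hpb]; exact hat.symm), if_neg hbt, if_pos rfl]
      have e2 : sc2 p r1 t b (p t) = 3 := by
        rw [sc2, if_neg (by rw [hpb]; exact haq.symm), if_neg hbt, if_neg (hnf t),
          if_neg hbq]
      have e3 : sc2 p r1 t b a = r1 b a := by rw [sc2, if_pos hpb.symm]
      rw [e1, e2, e3]
    unfold TopTwo
    intro hcard
    have hsub : ({a, b} : Finset (Fin 4)) ⊆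
        Finset.univ.filter (fun j => points (sc2 p r1 t) t < points (sc2 p r1 t) j) := by
      intro x hx
      simp only [Finset.mem_insert, Finset.mem_singleton] at hx
      rcases hx with rfl | rfl
      · simp only [Finset.mem_filter, Finset.mem_univ, true_and]
        rw [hpt, hpta]; omega
      · simp only [Finset.mem_filter, Finset.mem_univ, true_and]
        rw [hpt, hptb]; omega
    have h2 : ({a, b} : Finset (Fin 4)).card = 2 := by
      rw [Finset.card_insert_of_notMem (by simp [hab]), Finset.card_singleton]
    have := Finset.card_le_card hsub
    omega
end
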